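/- For any molecule N with n sites (arbitrary binding energies in ℂ* and interaction energies in ℂ*), there exists a decoupled molecule M with n sites (possibly complex binding energies, all interaction energies 1) with the same binding polynomial: P_M = P_N. Moreover M is unique up to permutation of its binding energies. -/

import Mathlib

open Polynomial

/-- The binding polynomial of a molecule with `n` sites, binding energies `g` and
interaction energies `w` (used symmetrically). -/
noncomputable def bindingPoly (n : ℕ) (g : Fin n → ℂ) (w : Fin n → Fin n → ℂ) :
    Polynomial ℂ :=
  ∑ S : Finset (Fin n),
    C ((∏ i ∈ S, g i) *
        ∏ p ∈ Finset.univ.filter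
          (fun p : Fin n × Fin n => p.1 < p.2 ∧ p.1 ∈ S ∧ p.2 ∈ S), w p.1 p.2) *
      X ^ S.card

lemma bindingPoly_one (n : ℕ) (h : Fin n → ℂ) :
    bindingPoly n h (fun _ _ => 1) = ∏ i, (C (h i) * X + 1) := by
  rw [Finset.prod_add, Finset.powerset_univ]
  unfold bindingPoly
  refine Finset.sum_congr rfl fun S _ => ?_
  rw [Finset.prod_const_one, mul_one, Finset.prod_const_one, mul_one,
    Finset.prod_mul_distrib, Finset.prod_const, map_prod]

lemma bindingPoly_coeff_zero (n : ℕ) (g : Fin n → ℂ) (w : Fin n → Fin n → ℂ) :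
    (bindingPoly n g w).coeff 0 = 1 := by
  unfold bindingPoly
  rw [finset_sum_coeff]
  rw [Finset.sum_eq_single (∅ : Finset (Fin n))]
  · rw [coeff_C_mul, coeff_X_pow, if_pos (by simp)]
    simp
  · intro S _ hS
    rw [coeff_C_mul, coeff_X_pow, if_neg, mul_zero]
    exact fun h => hS (Finset.card_eq_zero.mp h.symm)
  · simp

lemma bindingPoly_coeff_n (n : ℕ) (g : Fin n → ℂ) (w : Fin n → Fin n → ℂ) :
    (bindingPoly n g w).coeff n =
      (∏ i, g i) * ∏ p ∈ Finset.univ.filter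
          (fun p : Fin n × Fin n => p.1 < p.2), w p.1 p.2 := by
  unfold bindingPoly
  rw [finset_sum_coeff]
  rw [Finset.sum_eq_single (Finset.univ : Finset (Fin n))]
  · rw [coeff_C_mul, coeff_X_pow, if_pos (by simp), mul_one]
    congr 1
    apply Finset.prod_congr _ fun _ _ => rfl
    ext p; simp
  · intro S _ hS
    rw [coeff_C_mul, coeff_X_pow, if_neg, mul_zero]
    intro h
    exact hS (Finset.card_eq_iff_eq_univ S |>.mp (by simp [← h]))
  · simp

lemma bindingPoly_natDegree (n : ℕ) (g : Fin n → ℂ) (w : Fin n → Fin n → ℂ)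
    (hg : ∀ i, g i ≠ 0) (hw : ∀ i j, w i j ≠ 0) :
    (bindingPoly n g w).natDegree = n := by
  have hne : (bindingPoly n g w).coeff n ≠ 0 := by
    rw [bindingPoly_coeff_n]
    refine mul_ne_zero (Finset.prod_ne_zero_iff.mpr fun i _ => hg i)
      (Finset.prod_ne_zero_iff.mpr fun p _ => hw p.1 p.2)
  refine le_antisymm ?_ (le_natDegree_of_ne_zero hne)
  rw [natDegree_le_iff_degree_le]
  unfold bindingPoly
  refine (degree_sum_le _ _).trans ?_
  rw [Finset.sup_le_iff]
  intro S _
  refine (degree_mul_le _ _).trans ?_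
  refine le_trans (add_le_add degree_C_le (degree_X_pow _).le) ?_
  have : S.card ≤ n := by simpa using S.card_le_univ
  simpa using this

lemma exists_factorization (n : ℕ) (p : Polynomial ℂ) (hd : p.natDegree = n)
    (h0 : p.coeff 0 = 1) :
    ∃ h : Fin n → ℂ, (∀ i, h i ≠ 0) ∧ ∏ i, (C (h i) * X + 1) = p := by
  have hp0 : p ≠ 0 := fun h => by simp [h] at h0
  have hsplit : p.Splits := IsAlgClosed.splits p
  have hcard : Multiset.card p.roots = n := by
    rw [(Polynomial.splits_iff_card_roots).mp hsplit, hd]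
  have hroots_ne : ∀ r ∈ p.roots, r ≠ 0 := by
    intro r hr h
    subst h
    have := isRoot_of_mem_roots hr
    rw [IsRoot, ← coeff_zero_eq_eval_zero, h0] at this
    exact one_ne_zero this
  set l := p.roots.toList with hl
  have hlen : l.length = n := by rw [hl, Multiset.length_toList, hcard]
  refine ⟨fun i => -(l.get (finCongr hlen.symm i))⁻¹, fun i => ?_, ?_⟩
  · have hmem : l.get (finCongr hlen.symm i) ∈ p.roots := by
      exact Multiset.mem_toList.mp (l.get_mem _)
    exact neg_ne_zero.mpr (inv_ne_zero (hroots_ne _ hmem))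
  · -- product over Fin n equals product over roots
    have hmap : ∀ r ∈ p.roots, C (-r⁻¹) * X + 1 = C (-r⁻¹) * (X - C r) := by
      intro r hr
      have hr0 : r ≠ 0 := hroots_ne r hr
      rw [mul_sub, ← C_mul, neg_mul, inv_mul_cancel₀ hr0]
      simp
    have key : ∏ i : Fin n, (C (-(l.get (finCongr hlen.symm i))⁻¹) * X + 1) =
        (p.roots.map (fun r => C (-r⁻¹) * X + 1)).prod := by
      refine (Fintype.prod_equiv (finCongr hlen.symm) _
        (fun j : Fin l.length => C (-(l.get j)⁻¹) * X + 1) (fun i => rfl)).trans ?_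
      rw [← List.prod_ofFn]
      have : List.ofFn (fun j : Fin l.length => C (-(l.get j)⁻¹) * X + 1) =
          l.map (fun r => C (-r⁻¹) * X + 1) := by
        conv_rhs => rw [← List.ofFn_get l, List.map_ofFn]
        rfl
      rw [this, show p.roots = (↑l : Multiset ℂ) from (Multiset.coe_toList _).symm,
        Multiset.map_coe, Multiset.prod_coe]
    rw [key, Multiset.map_congr rfl hmap, Multiset.prod_map_mul]
    have hC : (p.roots.map (fun r => C (-r⁻¹))).prod =
        C ((p.roots.map (fun r => -r⁻¹)).prod) := by
      rw [map_multiset_prod, Multiset.map_map]; rfl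
    rw [hC]
    have hfac := hsplit.eq_prod_roots
    have heval : p.leadingCoeff * (p.roots.map (fun r => -r)).prod = 1 := by
      have := congrArg (Polynomial.eval 0) hfac
      rw [← coeff_zero_eq_eval_zero, h0] at this
      rw [eval_mul, eval_C, eval_multiset_prod, Multiset.map_map] at this
      simp only [Function.comp, eval_sub, eval_X, eval_C, zero_sub] at this
      exact this.symm
    have ht : (p.roots.map (fun r => -r)).prod ≠ 0 := by
      refine Multiset.prod_ne_zero ?_
      simp only [Multiset.mem_map]
      rintro ⟨r, hr, hr0⟩
      exact hroots_ne r hr (by simpa using hr0.symm)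
    have hc : (p.roots.map (fun r => -r⁻¹)).prod * (p.roots.map (fun r => -r)).prod = 1 := by
      rw [← Multiset.prod_map_mul]
      refine Multiset.prod_eq_one ?_
      simp only [Multiset.mem_map]
      rintro x ⟨r, hr, rfl⟩
      have hr0 : r ≠ 0 := hroots_ne r hr
      field_simp
    have hlc : (p.roots.map (fun r => -r⁻¹)).prod = p.leadingCoeff :=
      mul_right_cancel₀ ht (hc.trans heval.symm)
    rw [hlc, ← hfac]

lemma roots_prod_one_add (n : ℕ) (h : Fin n → ℂ) (hh : ∀ i, h i ≠ 0) :
    (∏ i, (C (h i) * X + 1)).roots =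
      Multiset.map (fun i => -(h i)⁻¹) Finset.univ.val := by
  have hfac : ∀ i : Fin n, C (h i) * X + 1 = C (h i) * (X - C (-(h i)⁻¹)) := by
    intro i
    rw [mul_sub, ← C_mul, mul_neg, mul_inv_cancel₀ (hh i)]
    simp
  have hne : ∀ i ∈ Finset.univ, C (h i) * X + 1 ≠ (0 : Polynomial ℂ) := by
    intro i _
    rw [hfac i]
    exact mul_ne_zero (by simpa using hh i) (X_sub_C_ne_zero _)
  rw [Polynomial.roots_prod _ _ (Finset.prod_ne_zero_iff.mpr hne)]
  have : ∀ i : Fin n, (C (h i) * X + 1).roots = {-(h i)⁻¹} := by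
    intro i
    rw [hfac i, Polynomial.roots_C_mul _ (hh i), roots_X_sub_C]
  calc Finset.univ.val.bind (fun i => (C (h i) * X + 1).roots)
      = Finset.univ.val.bind (fun i => ({-(h i)⁻¹} : Multiset ℂ)) := by
        exact Multiset.bind_congr (fun i _ => this i)
    _ = Multiset.map (fun i => -(h i)⁻¹) Finset.univ.val := Multiset.bind_singleton _ _

lemma exists_perm_of_ofFn_perm {α : Type*} : ∀ {n : ℕ} (f f' : Fin n → α),
    (List.ofFn f').Perm (List.ofFn f) → ∃ σ : Equiv.Perm (Fin n), f' = f ∘ σ := by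
  intro n
  induction n with
  | zero => intro f f' _; exact ⟨1, funext fun i => i.elim0⟩
  | succ n ih =>
    intro f f' hp
    have h0 : f' 0 ∈ List.ofFn f := hp.mem_iff.mp (by
      rw [List.ofFn_succ]; exact List.mem_cons_self)
    obtain ⟨j, hj⟩ := (List.mem_ofFn (f := f) (a := f' 0)).mp h0
    set g : Fin (n+1) → α := f ∘ Equiv.swap 0 j with hg
    have hgf : (List.ofFn g).Perm (List.ofFn f) := Equiv.Perm.ofFn_comp_perm _ f
    have hp' : (List.ofFn f').Perm (List.ofFn g) := hp.trans hgf.symm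
    have hg0 : g 0 = f' 0 := by simp [hg, hj]
    rw [List.ofFn_succ, List.ofFn_succ, ← hg0] at hp'
    have htail := hp'.cons_inv
    obtain ⟨τ, hτ⟩ := ih (fun i => g i.succ) (fun i => f' i.succ) htail
    set ext : Equiv.Perm (Fin (n+1)) :=
      ((finSuccEquiv n).symm).permCongr τ.optionCongr with hext
    have hext0 : ext 0 = 0 := by simp [hext]
    have hexts : ∀ i : Fin n, ext i.succ = (τ i).succ := by intro i; simp [hext]
    refine ⟨ext.trans (Equiv.swap 0 j), funext fun i => ?_⟩
    refine Fin.cases ?_ (fun i => ?_) i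
    · simp [hext0, hj]
    · have := congrFun hτ i
      simp only [Function.comp_apply] at this ⊢
      rw [this, Equiv.trans_apply, hexts i]
      rfl

/-- Decoupled sites representation: every molecule `N` has a decoupled molecule `M`
with the same binding polynomial, unique up to relabelling of the sites. -/
theorem decoupled_sites_representation (n : ℕ) (g : Fin n → ℂ) (w : Fin n → Fin n → ℂ)
    (hg : ∀ i, g i ≠ 0) (hw : ∀ i j, w i j ≠ 0) (hsymm : ∀ i j, w i j = w j i) :
    ∃ h : Fin n → ℂ, (∀ i, h i ≠ 0) ∧
      bindingPoly n h (fun _ _ => 1) = bindingPoly n g w ∧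
      ∀ h' : Fin n → ℂ, (∀ i, h' i ≠ 0) →
        bindingPoly n h' (fun _ _ => 1) = bindingPoly n g w →
        ∃ σ : Equiv.Perm (Fin n), h' = h ∘ σ := by
  obtain ⟨h, hne, hfac⟩ := exists_factorization n (bindingPoly n g w)
    (bindingPoly_natDegree n g w hg hw) (bindingPoly_coeff_zero n g w)
  refine ⟨h, hne, by rw [bindingPoly_one]; exact hfac, ?_⟩
  intro h' hne' heq'
  have hprod : ∏ i, (C (h' i) * X + 1) = ∏ i, (C (h i) * X + 1) := by
    rw [← bindingPoly_one, ← bindingPoly_one, heq']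
    rw [bindingPoly_one, hfac]
  have hroots := congrArg Polynomial.roots hprod
  rw [roots_prod_one_add n h' hne', roots_prod_one_add n h hne] at hroots
  have hmap : Multiset.map h' Finset.univ.val = Multiset.map h Finset.univ.val := by
    have := congrArg (Multiset.map (fun z : ℂ => -z⁻¹)) hroots
    rw [Multiset.map_map, Multiset.map_map] at this
    have e : ∀ (f : Fin n → ℂ), (∀ i, f i ≠ 0) →
        ((fun z : ℂ => -z⁻¹) ∘ fun i => -(f i)⁻¹) = f := by
      intro f hf
      funext i
      simp [Function.comp, inv_neg, inv_inv]
    rwa [e h' hne', e h hne] at this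
  rw [Fin.univ_val_map, Fin.univ_val_map, Multiset.coe_eq_coe] at hmap
  exact exists_perm_of_ofFn_perm h h' hmap
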